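/- arXiv:1708.07156 — 3 statements merged into one kernel-verified Lean document; each statement's English description precedes it below -/
import Mathlib

section
/- For all integers m ≥ 1 and k ≥ 0, there exists a unique real polynomial P of degree at most M = m + 2(k+1) satisfying the Dirac-delta kernel conditions of order (m,k): P^{(i)}(1) = P^{(i)}(−1) = 0 for every i = 0, …, k; ∫_{−1}^{1} P(ξ) dξ = 1; and ∫_{−1}^{1} ξ^i P(ξ) dξ = 0 for every i = 1, …, m. -/
open Polynomial intervalIntegral

/-- A real polynomial `P` satisfies the Dirac-delta kernel conditions of order `(m, k)`:
`P⁽ⁱ⁾(±1) = 0` for `i = 0, …, k`, unit mass on `[-1, 1]`, and `m` vanishing moments. -/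
def DiracDeltaKernelCond (m k : ℕ) (P : Polynomial ℝ) : Prop :=
  (∀ i ≤ k, (Polynomial.derivative^[i] P).eval (1 : ℝ) = 0 ∧
            (Polynomial.derivative^[i] P).eval (-1 : ℝ) = 0) ∧
  (∫ ξ in (-1 : ℝ)..1, P.eval ξ) = 1 ∧
  (∀ i, 1 ≤ i → i ≤ m → (∫ ξ in (-1 : ℝ)..1, ξ ^ i * P.eval ξ) = 0)

noncomputable section DDaux

open MeasureTheory

namespace DDaux

/-- moment functional -/
def momL (i : ℕ) : Polynomial ℝ →ₗ[ℝ] ℝ where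
  toFun P := ∫ ξ in (-1:ℝ)..1, ξ ^ i * P.eval ξ
  map_add' P Q := by
    simp only [eval_add, mul_add]
    exact intervalIntegral.integral_add
      (((continuous_pow i).mul P.continuous_aeval).intervalIntegrable _ _)
      (((continuous_pow i).mul Q.continuous_aeval).intervalIntegrable _ _)
  map_smul' c P := by
    simp only [eval_smul, smul_eq_mul, RingHom.id_apply]
    rw [← intervalIntegral.integral_const_mul]
    congr 1; ext ξ; ring

@[simp] lemma momL_apply (i : ℕ) (P : Polynomial ℝ) :
    momL i P = ∫ ξ in (-1:ℝ)..1, ξ ^ i * P.eval ξ := rfl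

/-- eval of iterated derivative -/
def dL (c : ℝ) (i : ℕ) : Polynomial ℝ →ₗ[ℝ] ℝ :=
  (Polynomial.leval c).comp ((Polynomial.derivative : Module.End ℝ (Polynomial ℝ)) ^ i)

@[simp] lemma dL_apply (c : ℝ) (i : ℕ) (P : Polynomial ℝ) :
    dL c i P = (Polynomial.derivative^[i] P).eval c := by
  simp [dL, Module.End.pow_apply, Polynomial.leval_apply]

/-- Key injectivity lemma. -/
lemma key_inj (m k : ℕ) (P : Polynomial ℝ) (hdeg : P.natDegree ≤ m + 2*(k+1))
    (h1 : ∀ i ≤ k, (Polynomial.derivative^[i] P).eval (1:ℝ) = 0)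
    (h2 : ∀ i ≤ k, (Polynomial.derivative^[i] P).eval (-1:ℝ) = 0)
    (h3 : ∀ i ≤ m, (∫ ξ in (-1:ℝ)..1, ξ ^ i * P.eval ξ) = 0) : P = 0 := by
  by_contra hP
  have hr1 : (X - C (1:ℝ))^(k+1) ∣ P := by
    have hlt : k < P.rootMultiplicity 1 :=
      Polynomial.lt_rootMultiplicity_of_isRoot_iterate_derivative hP (fun i hi => h1 i hi)
    exact dvd_trans (pow_dvd_pow _ hlt) (P.pow_rootMultiplicity_dvd 1)
  have hr2 : (X - C (-1:ℝ))^(k+1) ∣ P := by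
    have hlt : k < P.rootMultiplicity (-1) :=
      Polynomial.lt_rootMultiplicity_of_isRoot_iterate_derivative hP (fun i hi => h2 i hi)
    exact dvd_trans (pow_dvd_pow _ hlt) (P.pow_rootMultiplicity_dvd (-1))
  have hcop : IsCoprime ((X - C (1:ℝ))^(k+1)) ((X - C (-1:ℝ))^(k+1)) := by
    refine IsCoprime.pow ?_
    exact Polynomial.isCoprime_X_sub_C_of_isUnit_sub (by norm_num)
  obtain ⟨Q, hQ⟩ : (X - C (1:ℝ))^(k+1) * (X - C (-1:ℝ))^(k+1) ∣ P := hcop.mul_dvd hr1 hr2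
  have hQ0 : Q ≠ 0 := by
    rintro rfl; rw [mul_zero] at hQ; exact hP hQ
  have hfac0 : ((X - C (1:ℝ))^(k+1) * (X - C (-1:ℝ))^(k+1)) ≠ 0 := by
    apply mul_ne_zero <;> exact pow_ne_zero _ (Polynomial.X_sub_C_ne_zero _)
  have hQdeg : Q.natDegree ≤ m := by
    have := Polynomial.natDegree_mul hfac0 hQ0
    rw [← hQ] at this
    have hfacdeg : ((X - C (1:ℝ))^(k+1) * (X - C (-1:ℝ))^(k+1)).natDegree = 2*(k+1) := by
      rw [Polynomial.natDegree_mul (pow_ne_zero _ (Polynomial.X_sub_C_ne_zero _))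
        (pow_ne_zero _ (Polynomial.X_sub_C_ne_zero _)),
        Polynomial.natDegree_pow, Polynomial.natDegree_pow, Polynomial.natDegree_X_sub_C, Polynomial.natDegree_X_sub_C]
      ring
    rw [hfacdeg] at this
    omega
  -- the integral of Q * P vanishes
  have hQP : (∫ ξ in (-1:ℝ)..1, Q.eval ξ * P.eval ξ) = 0 := by
    have hrepr : ∀ ξ : ℝ, Q.eval ξ * P.eval ξ
        = ∑ i ∈ Finset.range (m+1), Q.coeff i * (ξ^i * P.eval ξ) := by
      intro ξ
      rw [Polynomial.eval_eq_sum_range' (Nat.lt_succ_of_le hQdeg) ξ, Finset.sum_mul]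
      exact Finset.sum_congr rfl (fun i _ => by ring)
    simp only [hrepr]
    rw [intervalIntegral.integral_finset_sum]
    · refine Finset.sum_eq_zero fun i hi => ?_
      rw [intervalIntegral.integral_const_mul,
        h3 i (Nat.lt_succ_iff.mp (Finset.mem_range.mp hi)), mul_zero]
    · intro i _
      exact (continuous_const.mul ((continuous_pow i).mul P.continuous_aeval)).intervalIntegrable _ _
  -- the nonnegative polynomial S
  set S : Polynomial ℝ := (1 - X)^(k+1) * (1 + X)^(k+1) * Q^2 with hSdef
  have hSeval : ∀ ξ : ℝ, S.eval ξ = (1-ξ)^(k+1) * (1+ξ)^(k+1) * (Q.eval ξ)^2 := by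
    intro ξ; simp [hSdef]
  have hkey : ∀ ξ : ℝ, Q.eval ξ * P.eval ξ = (-1:ℝ)^(k+1) * S.eval ξ := by
    intro ξ
    have hPe : P.eval ξ = (ξ-1)^(k+1) * (ξ+1)^(k+1) * Q.eval ξ := by
      rw [hQ]; simp
    have e2 : ((ξ-1)*(ξ+1) : ℝ) = (-1) * ((1-ξ)*(1+ξ)) := by ring
    have e3 : ((ξ-1)*(ξ+1) : ℝ)^(k+1) = (-1:ℝ)^(k+1) * ((1-ξ)*(1+ξ))^(k+1) := by
      rw [e2, mul_pow]
    rw [hPe, hSeval]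
    calc Q.eval ξ * ((ξ-1)^(k+1) * (ξ+1)^(k+1) * Q.eval ξ)
        = ((ξ-1)*(ξ+1))^(k+1) * (Q.eval ξ)^2 := by rw [mul_pow]; ring
      _ = (-1:ℝ)^(k+1) * (((1-ξ)*(1+ξ))^(k+1) * (Q.eval ξ)^2) := by rw [e3]; ring
      _ = (-1:ℝ)^(k+1) * ((1-ξ)^(k+1) * (1+ξ)^(k+1) * (Q.eval ξ)^2) := by rw [mul_pow]
  have hS0 : (∫ ξ in (-1:ℝ)..1, S.eval ξ) = 0 := by
    have : (∫ ξ in (-1:ℝ)..1, Q.eval ξ * P.eval ξ)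
        = (-1:ℝ)^(k+1) * ∫ ξ in (-1:ℝ)..1, S.eval ξ := by
      simp only [hkey]
      rw [intervalIntegral.integral_const_mul]
    rw [hQP] at this
    have hne : ((-1:ℝ)^(k+1)) ≠ 0 := by
      simp
    field_simp at this
    exact (mul_eq_zero.mp this.symm).resolve_left hne
  have hSne : S ≠ 0 := by
    apply mul_ne_zero (mul_ne_zero _ _) (pow_ne_zero _ hQ0) <;>
    · apply pow_ne_zero
      intro h
      have := congrArg (Polynomial.eval (0:ℝ)) h
      simp at this
  -- positivity contradiction
  rw [intervalIntegral.integral_of_le (by norm_num : (-1:ℝ) ≤ 1)] at hS0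
  have hnn : 0 ≤ᵐ[volume.restrict (Set.Ioc (-1:ℝ) 1)] fun ξ => S.eval ξ := by
    filter_upwards [ae_restrict_mem measurableSet_Ioc] with ξ hξ
    rw [hSeval]
    have h1' : (0:ℝ) ≤ 1 - ξ := by linarith [hξ.2]
    have h2' : (0:ℝ) ≤ 1 + ξ := by linarith [hξ.1.le]
    positivity
  have hint : IntegrableOn (fun ξ => S.eval ξ) (Set.Ioc (-1:ℝ) 1) volume :=
    S.continuous_aeval.integrableOn_Ioc
  have hiff := MeasureTheory.setIntegral_pos_iff_support_of_nonneg_ae hnn hint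
  have hsup : volume (Function.support (fun ξ => S.eval ξ) ∩ Set.Ioc (-1:ℝ) 1) = 0 := by
    by_contra h
    have hpos := hiff.mpr (pos_iff_ne_zero.mpr h)
    rw [hS0] at hpos
    exact lt_irrefl _ hpos
  have hsub : Set.Ioc (-1:ℝ) 1 \ {x | S.IsRoot x}
      ⊆ Function.support (fun ξ => S.eval ξ) ∩ Set.Ioc (-1:ℝ) 1 := by
    rintro x ⟨hx1, hx2⟩
    exact ⟨hx2, hx1⟩
  have hroots : volume {x : ℝ | S.IsRoot x} = 0 :=
    (Polynomial.finite_setOf_isRoot hSne).measure_zero _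
  have hvol : volume (Set.Ioc (-1:ℝ) 1 \ {x | S.IsRoot x}) = volume (Set.Ioc (-1:ℝ) 1) :=
    MeasureTheory.measure_diff_null hroots
  have : volume (Set.Ioc (-1:ℝ) 1) = 0 := by
    rw [← hvol]
    exact le_antisymm (le_trans (measure_mono hsub) hsup.le) (zero_le)
  rw [Real.volume_Ioc] at this
  simp at this
  norm_num at this


abbrev Wsp (m k : ℕ) := (Fin (k+1) → ℝ) × (Fin (k+1) → ℝ) × (Fin (m+1) → ℝ)

def Lfull (m k : ℕ) : Polynomial ℝ →ₗ[ℝ] Wsp m k :=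
  (LinearMap.pi fun i : Fin (k+1) => dL 1 (i : ℕ)).prod
    ((LinearMap.pi fun i : Fin (k+1) => dL (-1) (i : ℕ)).prod
      (LinearMap.pi fun i : Fin (m+1) => momL (i : ℕ)))

def Lres (m k : ℕ) : Polynomial.degreeLT ℝ (m+2*(k+1)+1) →ₗ[ℝ] Wsp m k :=
  (Lfull m k).comp (Submodule.subtype _)

lemma Lres_apply (m k : ℕ) (x : Polynomial.degreeLT ℝ (m+2*(k+1)+1)) : Lres m k x =
    ((fun i : Fin (k+1) => (Polynomial.derivative^[(i:ℕ)] (x:Polynomial ℝ)).eval 1),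
     (fun i : Fin (k+1) => (Polynomial.derivative^[(i:ℕ)] (x:Polynomial ℝ)).eval (-1)),
     (fun i : Fin (m+1) => ∫ ξ in (-1:ℝ)..1, ξ^(i:ℕ) * (x:Polynomial ℝ).eval ξ)) := by
  refine Prod.ext ?_ (Prod.ext ?_ ?_) <;> funext i <;>
    simp [Lres, Lfull, LinearMap.prod_apply, LinearMap.pi_apply]

lemma mem_degreeLT_iff (n : ℕ) (P : Polynomial ℝ) :
    P ∈ Polynomial.degreeLT ℝ (n+1) ↔ P.natDegree ≤ n := by
  rw [Polynomial.mem_degreeLT]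
  rcases eq_or_ne P 0 with rfl | h
  · simp only [Polynomial.degree_zero, Polynomial.natDegree_zero, Nat.zero_le, iff_true]
    exact_mod_cast WithBot.bot_lt_coe _
  · rw [← Polynomial.natDegree_lt_iff_degree_lt h, Nat.lt_succ_iff]

lemma key_injective (m k : ℕ) : Function.Injective (Lres m k) := by
  refine (injective_iff_map_eq_zero _).mpr ?_
  rintro ⟨P, hP⟩ hx
  rw [Lres_apply] at hx
  rw [Prod.ext_iff, Prod.ext_iff] at hx
  obtain ⟨hxa, hxb, hxc⟩ := hx
  have h0 : P = 0 := by
    apply key_inj m k P ((mem_degreeLT_iff _ P).mp hP)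
    · intro i hi
      have := congrFun hxa ⟨i, by omega⟩
      simpa using this
    · intro i hi
      have := congrFun hxb ⟨i, by omega⟩
      simpa using this
    · intro i hi
      have := congrFun hxc ⟨i, by omega⟩
      simpa using this
  exact Subtype.ext h0

end DDaux

end DDaux

theorem dirac_delta_kernel_exists_unique (m k : ℕ) (hm : 1 ≤ m) :
    ∃! P : Polynomial ℝ, P.natDegree ≤ m + 2 * (k + 1) ∧ DiracDeltaKernelCond m k P := by
  classical
  haveI : FiniteDimensional ℝ (Polynomial.degreeLT ℝ (m+2*(k+1)+1)) :=
    LinearEquiv.finiteDimensional (Polynomial.degreeLTEquiv ℝ (m+2*(k+1)+1)).symm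
  have hrank : Module.finrank ℝ (Polynomial.degreeLT ℝ (m+2*(k+1)+1))
      = Module.finrank ℝ (DDaux.Wsp m k) := by
    rw [(Polynomial.degreeLTEquiv ℝ (m+2*(k+1)+1)).finrank_eq]
    simp only [DDaux.Wsp, Module.finrank_prod, Module.finrank_fin_fun]
    omega
  have hinj := DDaux.key_injective m k
  have hsurj := (LinearMap.injective_iff_surjective_of_finrank_eq_finrank hrank).mp hinj
  obtain ⟨x, hx⟩ := hsurj ((0 : Fin (k+1) → ℝ), (0 : Fin (k+1) → ℝ),
    Pi.single (0 : Fin (m+1)) (1 : ℝ))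
  rw [DDaux.Lres_apply, Prod.ext_iff, Prod.ext_iff] at hx
  obtain ⟨hxa, hxb, hxc⟩ := hx
  dsimp only at hxa hxb hxc
  refine ⟨(x : Polynomial ℝ), ⟨(DDaux.mem_degreeLT_iff _ _).mp x.2, ?_, ?_, ?_⟩, ?_⟩
  · intro i hi
    constructor
    · have := congrFun hxa ⟨i, by omega⟩
      simpa using this
    · have := congrFun hxb ⟨i, by omega⟩
      simpa using this
  · have := congrFun hxc 0
    simpa using this
  · intro i hi1 him
    have := congrFun hxc ⟨i, by omega⟩
    have hne : (⟨i, by omega⟩ : Fin (m+1)) ≠ 0 := by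
      simp only [ne_eq, Fin.ext_iff, Fin.val_zero]
      omega
    rw [Pi.single_eq_of_ne hne] at this
    simpa using this
  · rintro P' ⟨hdeg', hc1, hc2, hc3⟩
    have hmem' : P' ∈ Polynomial.degreeLT ℝ (m+2*(k+1)+1) :=
      (DDaux.mem_degreeLT_iff _ _).mpr hdeg'
    have : (⟨P', hmem'⟩ : Polynomial.degreeLT ℝ (m+2*(k+1)+1)) = x := by
      apply hinj
      rw [DDaux.Lres_apply, DDaux.Lres_apply]
      rw [Prod.ext_iff, Prod.ext_iff]
      dsimp only
      refine ⟨funext fun i => ?_, funext fun i => ?_, funext fun j => ?_⟩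
      · rw [congrFun hxa i]
        exact (hc1 i (by omega : (i:ℕ) ≤ k)).1
      · rw [congrFun hxb i]
        exact (hc1 i (by omega : (i:ℕ) ≤ k)).2
      · rw [congrFun hxc j]
        rcases eq_or_ne j 0 with rfl | hj
        · simpa using hc2
        · have h1j : 1 ≤ (j:ℕ) := Nat.one_le_iff_ne_zero.mpr (fun h => hj (Fin.ext h))
          rw [Pi.single_eq_of_ne hj]
          exact hc3 (j:ℕ) h1j (by omega)
    exact congrArg Subtype.val this
end

section
/- Let m ≥ 1 be an integer and let P be a real polynomial with ∫_{−1}^{1} P(ξ) dξ = 1 and ∫_{−1}^{1} ξ^i P(ξ) dξ = 0 for i = 1, …, m. Let ε > 0, let x be a real number, and let u : ℝ → ℝ be (m+1)-times continuously differentiable on the interval [x − ε, x + ε] with |u^{(m+1)}(y)| ≤ K for all y in that interval. Then |∫_{−1}^{1} u(x − εξ) P(ξ) dξ − u(x)| ≤ (K ε^{m+1} / (m+1)!) · ∫_{−1}^{1} |ξ|^{m+1} |P(ξ)| dξ. In particular the regularized Dirac-delta approximation has accuracy O(ε^{m+1}) on functions of bounded (m+1)-st derivative. -/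
open Polynomial intervalIntegral

lemma abs_integral_abs_pow (n : ℕ) (d : ℝ) :
    |∫ t in (0:ℝ)..d, |t| ^ n| = |d| ^ (n + 1) / (n + 1) := by
  rcases le_total 0 d with h | h
  · rw [intervalIntegral.integral_congr (g := fun t => t ^ n)
      (fun t ht => by
        rw [Set.uIcc_of_le h] at ht
        rw [abs_of_nonneg ht.1]),
      integral_pow, zero_pow (by omega : n + 1 ≠ 0), sub_zero]
    rw [abs_of_nonneg h, abs_div, abs_pow, abs_of_nonneg h,
      abs_of_pos (by positivity : (0:ℝ) < (n:ℝ) + 1)]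
  · rw [intervalIntegral.integral_congr (g := fun t => (-1 : ℝ) ^ n * t ^ n)
      (fun t ht => by
        rw [Set.uIcc_of_ge h] at ht
        rw [abs_of_nonpos ht.2, neg_eq_neg_one_mul, mul_pow]),
      intervalIntegral.integral_const_mul, integral_pow]
    rw [zero_pow (by omega : n + 1 ≠ 0), sub_zero, abs_mul, abs_pow, abs_neg, abs_one,
      one_pow, one_mul, abs_div, abs_pow, abs_of_pos (by positivity : (0:ℝ) < (n:ℝ) + 1)]

lemma taylor_center_bound {u : ℝ → ℝ} {a b K : ℝ} {n : ℕ} (hab : a < b)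
    (hu : ContDiffOn ℝ ((n : ℕ∞) + 1) u (Set.Icc a b))
    (hK : ∀ t ∈ Set.Icc a b, |iteratedDerivWithin (n + 1) u (Set.Icc a b) t| ≤ K)
    {c y : ℝ} (hc : c ∈ Set.Icc a b) (hy : y ∈ Set.Icc a b) :
    |u y - taylorWithinEval u n (Set.Icc a b) c y| ≤
      K * |y - c| ^ (n + 1) / (Nat.factorial (n + 1)) := by
  set s := Set.Icc a b with hs_def
  have hs : UniqueDiffOn ℝ s := uniqueDiffOn_Icc hab
  have hK0 : 0 ≤ K := le_trans (abs_nonneg _) (hK c hc)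
  have hu' : DifferentiableOn ℝ (iteratedDerivWithin n u s) s :=
    hu.differentiableOn_iteratedDerivWithin (by exact_mod_cast Nat.lt_succ_self n) hs
  set g : ℝ → ℝ := fun t => taylorWithinEval u n s t y with hg_def
  set g' : ℝ → ℝ := fun t =>
    ((n.factorial : ℝ)⁻¹ * (y - t) ^ n) * iteratedDerivWithin (n + 1) u s t with hg'_def
  have hderiv : ∀ t ∈ s, HasDerivWithinAt g (g' t) s t := fun t ht =>
    hasDerivWithinAt_taylorWithinEval_at_Icc y hab ht hu.of_succ hu'
  have hsub : Set.uIcc c y ⊆ s := Set.uIcc_subset_Icc hc hy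
  have hgc : ContinuousOn g s := continuousOn_taylorWithinEval hs hu.of_succ
  have hg'c : ContinuousOn g' s :=
    (continuousOn_const.mul ((continuousOn_const.sub continuousOn_id).pow n)).mul
      (hu.continuousOn_iteratedDerivWithin le_rfl hs)
  have hint : IntervalIntegrable g' MeasureTheory.volume c y :=
    (hg'c.mono hsub).intervalIntegrable
  have hFTC : (∫ t in c..y, g' t) = g y - g c := by
    apply integral_eq_sub_of_hasDeriv_right (hgc.mono hsub) _ hint
    intro t ht
    have hts : t ∈ s := by
      constructor
      · exact le_trans (le_min hc.1 hy.1) ht.1.le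
      · exact le_trans ht.2.le (max_le hc.2 hy.2)
    have hta : a < t := lt_of_le_of_lt (le_min hc.1 hy.1) ht.1
    have htb : t < b := lt_of_lt_of_le ht.2 (max_le hc.2 hy.2)
    exact (((hderiv t hts).hasDerivAt (Icc_mem_nhds hta htb)).hasDerivWithinAt)
  have hgy : g y = u y := taylorWithinEval_self u n s y
  have heq : u y - taylorWithinEval u n s c y = ∫ t in c..y, g' t := by
    rw [hFTC, hgy]
  rw [heq]
  have hφ : IntervalIntegrable (fun t => (n.factorial : ℝ)⁻¹ * K * |y - t| ^ n)
      MeasureTheory.volume c y :=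
    ((by continuity : Continuous (fun t : ℝ => (n.factorial : ℝ)⁻¹ * K * |y - t| ^ n)).intervalIntegrable c y)
  have hbound : |∫ t in c..y, g' t| ≤ |∫ t in c..y, (n.factorial : ℝ)⁻¹ * K * |y - t| ^ n| := by
    rw [← Real.norm_eq_abs (∫ t in c..y, g' t)]
    apply intervalIntegral.norm_integral_le_abs_of_norm_le _ hφ
    refine (MeasureTheory.ae_restrict_mem measurableSet_uIoc).mono (fun t ht => ?_)
    have hts : t ∈ s := hsub (Set.uIoc_subset_uIcc ht)
    have : |g' t| ≤ ((n.factorial : ℝ)⁻¹ * |y - t| ^ n) * K := by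
      rw [hg'_def]
      simp only [abs_mul]
      rw [abs_of_nonneg (by positivity : (0:ℝ) ≤ (n.factorial : ℝ)⁻¹), abs_pow]
      gcongr
      exact hK t hts
    simpa [Real.norm_eq_abs, mul_comm, mul_assoc, mul_left_comm] using this
  refine hbound.trans ?_
  have hcalc : (∫ t in c..y, (n.factorial : ℝ)⁻¹ * K * |y - t| ^ n) =
      (n.factorial : ℝ)⁻¹ * K * ∫ t in c..y, |y - t| ^ n := by
    rw [intervalIntegral.integral_const_mul]
  have hsubst : (∫ t in c..y, |y - t| ^ n) = ∫ t in (y - y)..(y - c), |t| ^ n :=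
    intervalIntegral.integral_comp_sub_left (fun t => |t| ^ n) y
  rw [hcalc, abs_mul, hsubst, sub_self, abs_integral_abs_pow]
  rw [abs_of_nonneg (by positivity : (0:ℝ) ≤ (n.factorial : ℝ)⁻¹ * K)]
  rw [Nat.factorial_succ]
  have : |y - c| ^ (n + 1) / (n + 1) * ((n.factorial : ℝ)⁻¹ * K) =
      K * |y - c| ^ (n + 1) / ((n + 1) * n.factorial) := by
    field_simp
  push_cast
  rw [mul_comm]
  rw [this]

theorem dirac_delta_filter_accuracy (m : ℕ) (hm : 1 ≤ m) (P : Polynomial ℝ)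
    (hmass : (∫ ξ in (-1 : ℝ)..1, P.eval ξ) = 1)
    (hmom : ∀ i, 1 ≤ i → i ≤ m → (∫ ξ in (-1 : ℝ)..1, ξ ^ i * P.eval ξ) = 0)
    (ε : ℝ) (hε : 0 < ε) (x : ℝ) (u : ℝ → ℝ) (K : ℝ)
    (hu : ContDiffOn ℝ (m + 1 : ℕ) u (Set.Icc (x - ε) (x + ε)))
    (hK : ∀ y ∈ Set.Icc (x - ε) (x + ε),
      |iteratedDerivWithin (m + 1) u (Set.Icc (x - ε) (x + ε)) y| ≤ K) :
    |(∫ ξ in (-1 : ℝ)..1, u (x - ε * ξ) * P.eval ξ) - u x| ≤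
      K * ε ^ (m + 1) / (Nat.factorial (m + 1)) *
        ∫ ξ in (-1 : ℝ)..1, |ξ| ^ (m + 1) * |P.eval ξ| := by
  set s := Set.Icc (x - ε) (x + ε) with hs_def
  have hab : x - ε < x + ε := by linarith
  have hx : x ∈ s := ⟨by linarith, by linarith⟩
  have hK0 : 0 ≤ K := le_trans (abs_nonneg _) (hK x hx)
  have hmem : ∀ ξ ∈ Set.Icc (-1:ℝ) 1, x - ε * ξ ∈ s := by
    intro ξ hξ
    constructor
    · nlinarith [hξ.1, hξ.2]
    · nlinarith [hξ.1, hξ.2]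
  have hu' : ContDiffOn ℝ ((m : ℕ∞) + 1) u s := by exact_mod_cast hu
  have hucont : ContinuousOn u s := hu.continuousOn
  set T : ℝ → ℝ := fun y => taylorWithinEval u m s x y with hT_def
  have hTc : Continuous T := by
    simp only [hT_def, taylor_within_apply]
    exact continuous_finset_sum _ fun k _ =>
      ((continuous_const.mul ((continuous_id.sub continuous_const).pow k)).smul continuous_const)
  have huIcc : Set.uIcc (-1:ℝ) 1 = Set.Icc (-1:ℝ) 1 := Set.uIcc_of_le (by norm_num)
  have h1 : IntervalIntegrable (fun ξ => u (x - ε * ξ) * P.eval ξ)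
      MeasureTheory.volume (-1) 1 := by
    apply ContinuousOn.intervalIntegrable
    rw [huIcc]
    exact (hucont.comp (by fun_prop) hmem).mul P.continuous.continuousOn
  have h2 : IntervalIntegrable (fun ξ => T (x - ε * ξ) * P.eval ξ)
      MeasureTheory.volume (-1) 1 :=
    ((hTc.comp (by fun_prop)).mul P.continuous).intervalIntegrable _ _
  have hdiff : (∫ ξ in (-1:ℝ)..1, (u (x - ε * ξ) - T (x - ε * ξ)) * P.eval ξ) =
      (∫ ξ in (-1:ℝ)..1, u (x - ε * ξ) * P.eval ξ) -
        ∫ ξ in (-1:ℝ)..1, T (x - ε * ξ) * P.eval ξ := by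
    simp_rw [sub_mul]
    exact intervalIntegral.integral_sub h1 h2
  have hTint : (∫ ξ in (-1:ℝ)..1, T (x - ε * ξ) * P.eval ξ) = u x := by
    have hexp : ∀ ξ : ℝ, T (x - ε * ξ) * P.eval ξ =
        ∑ k ∈ Finset.range (m + 1),
          (((k.factorial : ℝ))⁻¹ * (-ε) ^ k * iteratedDerivWithin k u s x) *
            (ξ ^ k * P.eval ξ) := by
      intro ξ
      simp only [hT_def]
      rw [taylor_within_apply, Finset.sum_mul]
      apply Finset.sum_congr rfl
      intro k _
      rw [smul_eq_mul]
      ring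
    simp_rw [hexp]
    rw [intervalIntegral.integral_finset_sum (f := fun k ξ =>
        (((k.factorial : ℝ))⁻¹ * (-ε) ^ k * iteratedDerivWithin k u s x) * (ξ ^ k * P.eval ξ)) (fun k _ =>
      ((continuous_const.mul ((continuous_pow k).mul P.continuous)).intervalIntegrable _ _))]
    simp_rw [intervalIntegral.integral_const_mul]
    rw [Finset.sum_eq_single_of_mem 0 (Finset.mem_range.mpr (by omega))]
    · simp only [Nat.factorial_zero, Nat.cast_one, inv_one, pow_zero, one_mul,
        iteratedDerivWithin_zero]
      rw [hmass, mul_one]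
    · intro k hk hk0
      rw [hmom k (by omega) (by have := Finset.mem_range.mp hk; omega), mul_zero]
  have hrem : |∫ ξ in (-1:ℝ)..1, (u (x - ε * ξ) - T (x - ε * ξ)) * P.eval ξ| ≤
      K * ε ^ (m + 1) / (Nat.factorial (m + 1)) *
        ∫ ξ in (-1 : ℝ)..1, |ξ| ^ (m + 1) * |P.eval ξ| := by
    have hφ : IntervalIntegrable
        (fun ξ => K * ε ^ (m + 1) / (Nat.factorial (m + 1)) * (|ξ| ^ (m + 1) * |P.eval ξ|))
        MeasureTheory.volume (-1) 1 := by
      apply Continuous.intervalIntegrable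
      exact continuous_const.mul
        (((continuous_abs).pow _).mul (P.continuous.abs))
    rw [← Real.norm_eq_abs]
    have hb := intervalIntegral.norm_integral_le_abs_of_norm_le (μ := MeasureTheory.volume)
      (f := fun ξ => (u (x - ε * ξ) - T (x - ε * ξ)) * P.eval ξ)
      (a := (-1:ℝ)) (b := 1) ?_ hφ
    · refine hb.trans ?_
      rw [abs_of_nonneg, intervalIntegral.integral_const_mul]
      apply intervalIntegral.integral_nonneg (by norm_num)
      intro t ht
      positivity
    · refine (MeasureTheory.ae_restrict_mem measurableSet_uIoc).mono (fun t ht => ?_)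
      have ht' : t ∈ Set.Icc (-1:ℝ) 1 := by
        rw [← huIcc]; exact Set.uIoc_subset_uIcc ht
      have hy := hmem t ht'
      have hbound := taylor_center_bound hab hu' hK hx hy
      rw [Real.norm_eq_abs, abs_mul]
      have habs : |x - ε * t - x| = ε * |t| := by
        rw [show x - ε * t - x = -(ε * t) by ring, abs_neg, abs_mul, abs_of_pos hε]
      rw [habs] at hbound
      calc |u (x - ε * t) - T (x - ε * t)| * |P.eval t|
          ≤ (K * (ε * |t|) ^ (m + 1) / (Nat.factorial (m + 1))) * |P.eval t| := by
            apply mul_le_mul_of_nonneg_right hbound (abs_nonneg _)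
        _ = K * ε ^ (m + 1) / (Nat.factorial (m + 1)) * (|t| ^ (m + 1) * |P.eval t|) := by
            rw [mul_pow]; ring
  calc |(∫ ξ in (-1 : ℝ)..1, u (x - ε * ξ) * P.eval ξ) - u x|
      = |∫ ξ in (-1:ℝ)..1, (u (x - ε * ξ) - T (x - ε * ξ)) * P.eval ξ| := by
        rw [hdiff, hTint]
    _ ≤ _ := hrem
end

section
/- Let m ≥ 1 be an integer and let P be a real polynomial with ∫_{−1}^{1} P(ξ) dξ = 1 and ∫_{−1}^{1} ξ^i P(ξ) dξ = 0 for i = 1, …, m. Then there exists a constant C, depending only on P and m, such that for every ε > 0, every point (x, y) ∈ ℝ², and every function f : ℝ² → ℝ that is (m+1)-times continuously differentiable on the square [x − ε, x + ε] × [y − ε, y + ε] with all partial derivatives of total order m+1 bounded in absolute value by K there, one has |∫_{−1}^{1} ∫_{−1}^{1} f(x − ετ, y − εη) P(τ) P(η) dτ dη − f(x, y)| ≤ C K ε^{m+1}. -/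
open Polynomial intervalIntegral Set MeasureTheory
private lemma hasFTaylor_comp_const_add {E F : Type*} [NormedAddCommGroup E] [NormedSpace ℝ E]
    [NormedAddCommGroup F] [NormedSpace ℝ F] {n : WithTop ℕ∞} {f : E → F}
    {p : E → FormalMultilinearSeries ℝ E F} {s : Set E}
    (hf : HasFTaylorSeriesUpToOn n f p s) (c : E) :
    HasFTaylorSeriesUpToOn n (fun z => f (c + z)) (fun z => p (c + z))
      ((fun z => c + z) ⁻¹' s) := by
  refine ⟨fun x hx => hf.zero_eq _ hx, fun k hk x hx => ?_, fun k hk => ?_⟩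
  · have h1 : HasFDerivWithinAt (fun z : E => c + z) (ContinuousLinearMap.id ℝ E)
        ((fun z : E => c + z) ⁻¹' s) x := ((hasFDerivAt_id x).const_add c).hasFDerivWithinAt
    have h2 := ((hf.fderivWithin k hk (c + x) hx).comp x h1 (Set.mapsTo_preimage _ _))
    simpa [Function.comp_def] using h2
  · exact (hf.cont k hk).comp ((continuous_const.add continuous_id).continuousOn)
      (Set.mapsTo_preimage _ _)

private lemma section_iteratedDerivWithin {n : ℕ} {f : ℝ × ℝ → ℝ} {S : Set (ℝ × ℝ)}
    (hS : UniqueDiffOn ℝ S) (hf : ContDiffOn ℝ n f S) (c : ℝ × ℝ) (g : ℝ →L[ℝ] ℝ × ℝ)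
    {t : Set ℝ} (ht : UniqueDiffOn ℝ t) (hteq : (fun u => c + g u) ⁻¹' S = t)
    {k : ℕ} (hk : k ≤ n) {u : ℝ} (hu : u ∈ t) :
    iteratedDerivWithin k (fun u => f (c + g u)) t u
      = iteratedFDerivWithin ℝ k f S (c + g u) (fun _ => g 1) := by
  have h0 := hf.ftaylorSeriesWithin hS
  have h1 := (hasFTaylor_comp_const_add h0 c).compContinuousLinearMap g
  have hset : g ⁻¹' ((fun z => c + z) ⁻¹' S) = t := hteq
  rw [hset] at h1
  have h2 := h1.eq_iteratedFDerivWithin_of_uniqueDiffOn (m := k) (by exact_mod_cast hk) ht hu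
  rw [iteratedDerivWithin_eq_iteratedFDerivWithin]
  have h3 : iteratedFDerivWithin ℝ k ((fun z => f (c + z)) ∘ g) t u
      = iteratedFDerivWithin ℝ k (fun u => f (c + g u)) t u := rfl
  rw [← h3, ← h2]
  simp [ftaylorSeriesWithin]

private lemma integral_pow_mul_eval {m : ℕ} {P : Polynomial ℝ}
    (hmass : (∫ ξ in (-1 : ℝ)..1, P.eval ξ) = 1)
    (hmom : ∀ i, 1 ≤ i → i ≤ m → (∫ ξ in (-1 : ℝ)..1, ξ ^ i * P.eval ξ) = 0)
    {j : ℕ} (hj : j ≤ m) :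
    (∫ τ in (-1 : ℝ)..1, τ ^ j * P.eval τ) = if j = 0 then 1 else 0 := by
  rcases Nat.eq_zero_or_pos j with rfl | hj1
  · simpa using hmass
  · rw [if_neg (Nat.pos_iff_ne_zero.mp hj1)]
    exact hmom j hj1 hj

private lemma integral_affine_pow_mul {m : ℕ} {P : Polynomial ℝ}
    (hmass : (∫ ξ in (-1 : ℝ)..1, P.eval ξ) = 1)
    (hmom : ∀ i, 1 ≤ i → i ≤ m → (∫ ξ in (-1 : ℝ)..1, ξ ^ i * P.eval ξ) = 0)
    {k : ℕ} (hk : k ≤ m) (A c : ℝ) :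
    (∫ τ in (-1 : ℝ)..1, (A + c * τ) ^ k * P.eval τ) = A ^ k := by
  calc (∫ τ in (-1:ℝ)..1, (A + c * τ) ^ k * P.eval τ)
      = ∫ τ in (-1:ℝ)..1, ∑ j ∈ Finset.range (k+1),
          (c ^ j * A ^ (k - j) * (k.choose j : ℝ)) * (τ ^ j * P.eval τ) := by
        refine intervalIntegral.integral_congr fun τ _ => ?_
        rw [add_comm A, add_pow, Finset.sum_mul]
        exact Finset.sum_congr rfl fun j _ => by rw [mul_pow]; ring
    _ = ∑ j ∈ Finset.range (k+1), ∫ τ in (-1:ℝ)..1,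
          (c ^ j * A ^ (k - j) * (k.choose j : ℝ)) * (τ ^ j * P.eval τ) := by
        exact intervalIntegral.integral_finset_sum fun j _ =>
          Continuous.intervalIntegrable (continuous_const.mul ((continuous_pow j).mul P.continuous)) _ _
    _ = ∑ j ∈ Finset.range (k+1),
          (c ^ j * A ^ (k - j) * (k.choose j : ℝ)) * (if j = 0 then (1:ℝ) else 0) := by
        refine Finset.sum_congr rfl fun j hj => ?_
        rw [intervalIntegral.integral_const_mul,
          integral_pow_mul_eval hmass hmom (le_trans (Nat.lt_succ_iff.mp (Finset.mem_range.mp hj)) hk)]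
    _ = A ^ k := by
        rw [Finset.sum_eq_single 0]
        · simp
        · intro j _ hj0; simp [hj0]
        · intro h; exact absurd (Finset.mem_range.mpr (Nat.succ_pos k)) h


private lemma oneD (m : ℕ) (P : Polynomial ℝ)
    (hmass : (∫ ξ in (-1 : ℝ)..1, P.eval ξ) = 1)
    (hmom : ∀ i, 1 ≤ i → i ≤ m → (∫ ξ in (-1 : ℝ)..1, ξ ^ i * P.eval ξ) = 0)
    {ε : ℝ} (hε : 0 < ε) (z K : ℝ) (h : ℝ → ℝ)
    (hh : ContDiffOn ℝ (m + 1 : ℕ) h (Icc (z - ε) (z + ε)))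
    (hKb : ∀ w ∈ Icc (z - ε) (z + ε),
      |iteratedDerivWithin (m + 1) h (Icc (z - ε) (z + ε)) w| ≤ K) :
    |(∫ τ in (-1 : ℝ)..1, h (z - ε * τ) * P.eval τ) - h z|
      ≤ (2 : ℝ) ^ (m + 1) * ((∫ t in (-1 : ℝ)..1, |P.eval t|) + 1) * K * ε ^ (m + 1) := by
  have hab : z - ε ≤ z + ε := by linarith
  have hzI : z ∈ Icc (z - ε) (z + ε) := ⟨by linarith, by linarith⟩
  have hK0 : 0 ≤ K := le_trans (abs_nonneg _) (hKb z hzI)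
  set T : ℝ → ℝ := fun w => taylorWithinEval h m (Icc (z - ε) (z + ε)) (z - ε) w with hT
  -- remainder bound
  have hrem : ∀ w ∈ Icc (z - ε) (z + ε), |h w - T w| ≤ K * (2 : ℝ) ^ (m + 1) * ε ^ (m + 1) := by
    intro w hw
    have hb := taylor_mean_remainder_bound (n := m) hab hh hw
      (fun y hy => by rw [Real.norm_eq_abs]; exact hKb y hy)
    rw [Real.norm_eq_abs] at hb
    have h1 : K * (w - (z - ε)) ^ (m + 1) / (m.factorial : ℝ) ≤ K * (2 * ε) ^ (m + 1) := by
      have h2 : (w - (z - ε)) ^ (m + 1) ≤ (2 * ε) ^ (m + 1) := by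
        apply pow_le_pow_left₀ (by linarith [hw.1]) (by linarith [hw.2])
      have h3 : K * (w - (z - ε)) ^ (m + 1) / (m.factorial : ℝ) ≤ K * (w - (z - ε)) ^ (m + 1) := by
        apply div_le_self (mul_nonneg hK0 (pow_nonneg (by linarith [hw.1]) _)) (by exact_mod_cast m.factorial_pos)
      calc K * (w - (z - ε)) ^ (m + 1) / (m.factorial : ℝ) ≤ K * (w - (z - ε)) ^ (m + 1) := h3
        _ ≤ K * (2 * ε) ^ (m + 1) := mul_le_mul_of_nonneg_left h2 hK0
    calc |h w - T w| ≤ K * (w - (z - ε)) ^ (m + 1) / (m.factorial : ℝ) := hb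
      _ ≤ K * (2 * ε) ^ (m + 1) := h1
      _ = K * (2 : ℝ) ^ (m + 1) * ε ^ (m + 1) := by rw [mul_pow]; ring
  -- positivity of pow needs w - (z-ε) ≥ 0 : from hw.1.
  have hmapsτ : ∀ τ ∈ Icc (-1 : ℝ) 1, z - ε * τ ∈ Icc (z - ε) (z + ε) := by
    intro τ hτ
    constructor <;> nlinarith [hτ.1, hτ.2, hε.le]
  -- key : integral of Taylor polynomial
  have keyT : (∫ τ in (-1:ℝ)..1, T (z - ε * τ) * P.eval τ) = T z := by
    have e1 : ∀ τ : ℝ, T (z - ε * τ) * P.eval τ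
        = ∑ k ∈ Finset.range (m + 1),
            ((k.factorial : ℝ)⁻¹ * iteratedDerivWithin k h (Icc (z - ε) (z + ε)) (z - ε))
              * ((ε + (-ε) * τ) ^ k * P.eval τ) := by
      intro τ
      simp only [hT]
      rw [taylor_within_apply, Finset.sum_mul]
      refine Finset.sum_congr rfl fun k _ => ?_
      have e2 : z - ε * τ - (z - ε) = ε + (-ε) * τ := by ring
      rw [e2, smul_eq_mul]; ring
    rw [intervalIntegral.integral_congr fun τ _ => e1 τ]
    rw [intervalIntegral.integral_finset_sum (f := fun k τ =>
        ((k.factorial : ℝ)⁻¹ * iteratedDerivWithin k h (Icc (z - ε) (z + ε)) (z - ε))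
          * ((ε + (-ε) * τ) ^ k * P.eval τ))
      (fun k _ => Continuous.intervalIntegrable (by fun_prop) _ _)]
    simp only [hT]
    rw [taylor_within_apply]
    refine Finset.sum_congr rfl fun k hk => ?_
    rw [intervalIntegral.integral_const_mul,
      integral_affine_pow_mul hmass hmom (Nat.lt_succ_iff.mp (Finset.mem_range.mp hk)) ε (-ε)]
    have e3 : z - (z - ε) = ε := by ring
    rw [e3, smul_eq_mul]; ring
  -- integrability
  have hone : (-1 : ℝ) ≤ 1 := by norm_num
  have huIcc : Set.uIcc (-1 : ℝ) 1 = Icc (-1 : ℝ) 1 := Set.uIcc_of_le hone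
  have hhc : ContinuousOn (fun τ => h (z - ε * τ)) (Icc (-1 : ℝ) 1) := by
    apply hh.continuousOn.comp
      ((continuous_const.sub (continuous_const.mul continuous_id)).continuousOn) hmapsτ
  have hTc : Continuous (fun τ => T (z - ε * τ)) := by
    have : ∀ τ : ℝ, T (z - ε * τ) = ∑ k ∈ Finset.range (m + 1),
        ((k.factorial : ℝ)⁻¹ * (z - ε * τ - (z - ε)) ^ k)
          * iteratedDerivWithin k h (Icc (z - ε) (z + ε)) (z - ε) := by
      intro τ; simp only [hT]
      rw [taylor_within_apply]
      exact Finset.sum_congr rfl fun k _ => by rw [smul_eq_mul]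
    rw [funext this]
    exact continuous_finset_sum _ fun k _ =>
      (continuous_const.mul (((continuous_const.sub (continuous_const.mul continuous_id)).sub
        continuous_const).pow k)).mul continuous_const
  have int1 : IntervalIntegrable (fun τ => h (z - ε * τ) * P.eval τ) volume (-1) 1 :=
    ContinuousOn.intervalIntegrable (by rw [huIcc]; exact hhc.mul P.continuous.continuousOn)
  have int2 : IntervalIntegrable (fun τ => T (z - ε * τ) * P.eval τ) volume (-1) 1 :=
    (hTc.mul P.continuous).intervalIntegrable _ _
  have intP : IntervalIntegrable (fun τ => K * (2:ℝ)^(m+1) * ε^(m+1) * |P.eval τ|) volume (-1) 1 :=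
    (continuous_const.mul P.continuous.abs).intervalIntegrable _ _
  -- split
  have split : (∫ τ in (-1:ℝ)..1, h (z - ε * τ) * P.eval τ)
      = (∫ τ in (-1:ℝ)..1, (h (z - ε * τ) * P.eval τ - T (z - ε * τ) * P.eval τ)) + T z := by
    rw [intervalIntegral.integral_sub int1 int2, keyT]; ring
  rw [split]
  have est1 : |∫ τ in (-1:ℝ)..1, (h (z - ε * τ) * P.eval τ - T (z - ε * τ) * P.eval τ)|
      ≤ K * (2:ℝ)^(m+1) * ε^(m+1) * (∫ t in (-1:ℝ)..1, |P.eval t|) := by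
    calc |∫ τ in (-1:ℝ)..1, (h (z - ε * τ) * P.eval τ - T (z - ε * τ) * P.eval τ)|
        ≤ ∫ τ in (-1:ℝ)..1, |h (z - ε * τ) * P.eval τ - T (z - ε * τ) * P.eval τ| :=
          intervalIntegral.abs_integral_le_integral_abs hone
      _ ≤ ∫ τ in (-1:ℝ)..1, K * (2:ℝ)^(m+1) * ε^(m+1) * |P.eval τ| := by
          apply intervalIntegral.integral_mono_on hone ((int1.sub int2).abs) intP
          intro τ hτ
          rw [← sub_mul, abs_mul]
          apply mul_le_mul_of_nonneg_right _ (abs_nonneg _)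
          exact hrem _ (hmapsτ τ hτ)
      _ = K * (2:ℝ)^(m+1) * ε^(m+1) * (∫ t in (-1:ℝ)..1, |P.eval t|) :=
          intervalIntegral.integral_const_mul _ _
  have est2 : |T z - h z| ≤ K * (2:ℝ)^(m+1) * ε^(m+1) := by
    rw [abs_sub_comm]; exact hrem z hzI
  calc |(∫ τ in (-1:ℝ)..1, (h (z - ε * τ) * P.eval τ - T (z - ε * τ) * P.eval τ)) + T z - h z|
      ≤ |∫ τ in (-1:ℝ)..1, (h (z - ε * τ) * P.eval τ - T (z - ε * τ) * P.eval τ)| + |T z - h z| := by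
        rw [add_sub_assoc]; exact abs_add_le _ _
    _ ≤ K * (2:ℝ)^(m+1) * ε^(m+1) * (∫ t in (-1:ℝ)..1, |P.eval t|)
        + K * (2:ℝ)^(m+1) * ε^(m+1) := add_le_add est1 est2
    _ = (2:ℝ)^(m+1) * ((∫ t in (-1:ℝ)..1, |P.eval t|) + 1) * K * ε^(m+1) := by ring


theorem tensor_product_filter_accuracy (m : ℕ) (hm : 1 ≤ m) (P : Polynomial ℝ)
    (hmass : (∫ ξ in (-1 : ℝ)..1, P.eval ξ) = 1)
    (hmom : ∀ i, 1 ≤ i → i ≤ m → (∫ ξ in (-1 : ℝ)..1, ξ ^ i * P.eval ξ) = 0) :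
    ∃ C : ℝ, ∀ ε : ℝ, 0 < ε → ∀ x y : ℝ, ∀ K : ℝ, ∀ f : ℝ × ℝ → ℝ,
      ContDiffOn ℝ (m + 1 : ℕ) f (Set.Icc (x - ε) (x + ε) ×ˢ Set.Icc (y - ε) (y + ε)) →
      (∀ p ∈ Set.Icc (x - ε) (x + ε) ×ˢ Set.Icc (y - ε) (y + ε),
        ∀ v : Fin (m + 1) → ℝ × ℝ, (∀ i, v i = (1, 0) ∨ v i = (0, 1)) →
          |iteratedFDerivWithin ℝ (m + 1) f
              (Set.Icc (x - ε) (x + ε) ×ˢ Set.Icc (y - ε) (y + ε)) p v| ≤ K) →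
      |(∫ τ in (-1 : ℝ)..1, ∫ η in (-1 : ℝ)..1,
          f (x - ε * τ, y - ε * η) * (P.eval τ * P.eval η)) - f (x, y)| ≤
        C * K * ε ^ (m + 1) := by
  set Q : ℝ := ∫ t in (-1 : ℝ)..1, |P.eval t| with hQ
  set C1 : ℝ := (2 : ℝ) ^ (m + 1) * (Q + 1) with hC1
  refine ⟨C1 * (Q + 1), ?_⟩
  intro ε hε x y K f hf hK
  set S : Set (ℝ × ℝ) := Set.Icc (x - ε) (x + ε) ×ˢ Set.Icc (y - ε) (y + ε) with hS
  have hone : (-1 : ℝ) ≤ 1 := by norm_num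
  have huIcc : Set.uIcc (-1 : ℝ) 1 = Icc (-1 : ℝ) 1 := Set.uIcc_of_le hone
  have hQ0 : 0 ≤ Q := intervalIntegral.integral_nonneg hone fun _ _ => abs_nonneg _
  have hxI : x ∈ Icc (x - ε) (x + ε) := ⟨by linarith, by linarith⟩
  have hyI : y ∈ Icc (y - ε) (y + ε) := ⟨by linarith, by linarith⟩
  have hSud : UniqueDiffOn ℝ S :=
    (uniqueDiffOn_Icc (by linarith)).prod (uniqueDiffOn_Icc (by linarith))
  have hK0 : 0 ≤ K := le_trans (abs_nonneg _)
    (hK (x, y) ⟨hxI, hyI⟩ (fun _ => (1, 0)) fun _ => Or.inl rfl)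
  have haux : ∀ c t : ℝ, t ∈ Icc (-1 : ℝ) 1 → c - ε * t ∈ Icc (c - ε) (c + ε) := by
    intro c t ht
    constructor <;> nlinarith [ht.1, ht.2, hε.le]
  have hmem : ∀ τ ∈ Icc (-1 : ℝ) 1, ∀ η ∈ Icc (-1 : ℝ) 1, (x - ε * τ, y - ε * η) ∈ S :=
    fun τ hτ η hη => ⟨haux x τ hτ, haux y η hη⟩
  -- Tietze extension
  obtain ⟨g, hg⟩ := ContinuousMap.exists_restrict_eq
    (X := ℝ × ℝ) (isClosed_Icc.prod isClosed_Icc) ⟨S.restrict f, hf.continuousOn.restrict⟩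
  have hgf : ∀ p ∈ S, g p = f p := by
    intro p hp
    have := ContinuousMap.congr_fun hg ⟨p, hp⟩
    exact this
  -- inner estimate
  have inner_est : ∀ τ ∈ Icc (-1 : ℝ) 1,
      |(∫ η in (-1 : ℝ)..1, f (x - ε * τ, y - ε * η) * P.eval η) - f (x - ε * τ, y)|
        ≤ C1 * K * ε ^ (m + 1) := by
    intro τ hτ
    have hxτ := haux x τ hτ
    have hfun : (fun u => f ((x - ε * τ, 0) + (ContinuousLinearMap.inr ℝ ℝ ℝ) u))
        = fun u => f (x - ε * τ, u) := by
      funext u; simp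
    have hpre : (fun u => (x - ε * τ, 0) + (ContinuousLinearMap.inr ℝ ℝ ℝ) u) ⁻¹' S
        = Icc (y - ε) (y + ε) := by
      ext u
      simp [hS, Set.mem_prod, hxτ.1, hxτ.2]
    have hsec : ContDiffOn ℝ (m + 1 : ℕ) (fun u => f (x - ε * τ, u)) (Icc (y - ε) (y + ε)) := by
      apply hf.comp (contDiff_const.prodMk contDiff_id).contDiffOn
      intro u hu; exact ⟨hxτ, hu⟩
    have hKb : ∀ w ∈ Icc (y - ε) (y + ε),
        |iteratedDerivWithin (m + 1) (fun u => f (x - ε * τ, u)) (Icc (y - ε) (y + ε)) w| ≤ K := by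
      intro w hw
      have hd := section_iteratedDerivWithin hSud hf (x - ε * τ, 0)
        (ContinuousLinearMap.inr ℝ ℝ ℝ) (uniqueDiffOn_Icc (by linarith)) hpre
        (le_refl (m + 1)) hw
      rw [hfun] at hd
      rw [hd]
      have hpt : ((x - ε * τ, 0) : ℝ × ℝ) + (ContinuousLinearMap.inr ℝ ℝ ℝ) w = (x - ε * τ, w) := by
        simp
      have hv : (fun _ : Fin (m + 1) => (ContinuousLinearMap.inr ℝ ℝ ℝ) 1) =
          fun _ : Fin (m + 1) => ((0 : ℝ), (1 : ℝ)) := by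
        funext _; simp
      rw [hpt, hv]
      exact hK (x - ε * τ, w) ⟨hxτ, hw⟩ _ fun _ => Or.inr rfl
    exact oneD m P hmass hmom hε y K (fun u => f (x - ε * τ, u)) hsec hKb
  -- outer estimate
  have outer_est :
      |(∫ τ in (-1 : ℝ)..1, f (x - ε * τ, y) * P.eval τ) - f (x, y)| ≤ C1 * K * ε ^ (m + 1) := by
    have hfun : (fun u => f ((0, y) + (ContinuousLinearMap.inl ℝ ℝ ℝ) u))
        = fun u => f (u, y) := by
      funext u; simp
    have hpre : (fun u => ((0 : ℝ), y) + (ContinuousLinearMap.inl ℝ ℝ ℝ) u) ⁻¹' S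
        = Icc (x - ε) (x + ε) := by
      ext u
      simp [hS, Set.mem_prod, hyI.1, hyI.2]
    have hsec : ContDiffOn ℝ (m + 1 : ℕ) (fun u => f (u, y)) (Icc (x - ε) (x + ε)) := by
      apply hf.comp (contDiff_id.prodMk contDiff_const).contDiffOn
      intro u hu; exact ⟨hu, hyI⟩
    have hKb : ∀ w ∈ Icc (x - ε) (x + ε),
        |iteratedDerivWithin (m + 1) (fun u => f (u, y)) (Icc (x - ε) (x + ε)) w| ≤ K := by
      intro w hw
      have hd := section_iteratedDerivWithin hSud hf (0, y)
        (ContinuousLinearMap.inl ℝ ℝ ℝ) (uniqueDiffOn_Icc (by linarith)) hpre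
        (le_refl (m + 1)) hw
      rw [hfun] at hd
      rw [hd]
      have hpt : (((0 : ℝ), y) : ℝ × ℝ) + (ContinuousLinearMap.inl ℝ ℝ ℝ) w = (w, y) := by
        simp
      have hv : (fun _ : Fin (m + 1) => (ContinuousLinearMap.inl ℝ ℝ ℝ) 1) =
          fun _ : Fin (m + 1) => ((1 : ℝ), (0 : ℝ)) := by
        funext _; simp
      rw [hpt, hv]
      exact hK (w, y) ⟨hw, hyI⟩ _ fun _ => Or.inl rfl
    exact oneD m P hmass hmom hε x K (fun u => f (u, y)) hsec hKb
  -- the extended inner integral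
  set Ig : ℝ → ℝ := fun τ => ∫ η in (-1 : ℝ)..1, g (x - ε * τ, y - ε * η) * P.eval η with hIg
  have hIg_cont : Continuous Ig := by
    apply intervalIntegral.continuous_parametric_intervalIntegral_of_continuous'
    exact (g.continuous.comp (by fun_prop)).mul (P.continuous.comp continuous_snd)
  have hIg_eq : ∀ τ ∈ Icc (-1 : ℝ) 1,
      Ig τ = ∫ η in (-1 : ℝ)..1, f (x - ε * τ, y - ε * η) * P.eval η := by
    intro τ hτ
    refine intervalIntegral.integral_congr fun η hη => ?_
    rw [huIcc] at hη
    rw [hgf _ (hmem τ hτ η hη)]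
  set Bg : ℝ → ℝ := fun τ => g (x - ε * τ, y) with hBg
  have hBg_cont : Continuous Bg := g.continuous.comp (by fun_prop)
  have hBg_eq : ∀ τ ∈ Icc (-1 : ℝ) 1, Bg τ = f (x - ε * τ, y) := by
    intro τ hτ
    exact hgf _ ⟨haux x τ hτ, hyI⟩
  -- rewrite the double integral
  have step1 : (∫ τ in (-1 : ℝ)..1, ∫ η in (-1 : ℝ)..1,
      f (x - ε * τ, y - ε * η) * (P.eval τ * P.eval η)) = ∫ τ in (-1 : ℝ)..1, Ig τ * P.eval τ := by
    refine intervalIntegral.integral_congr fun τ hτ => ?_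
    rw [huIcc] at hτ
    rw [hIg_eq τ hτ, ← intervalIntegral.integral_mul_const]
    refine intervalIntegral.integral_congr fun η hη => ?_
    ring
  rw [step1]
  -- split
  have int1 : IntervalIntegrable (fun τ => (Ig τ - Bg τ) * P.eval τ) volume (-1) 1 :=
    (((hIg_cont.sub hBg_cont).mul P.continuous)).intervalIntegrable _ _
  have int2 : IntervalIntegrable (fun τ => Bg τ * P.eval τ) volume (-1) 1 :=
    ((hBg_cont.mul P.continuous)).intervalIntegrable _ _
  have intP : IntervalIntegrable (fun τ => C1 * K * ε ^ (m + 1) * |P.eval τ|) volume (-1) 1 :=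
    (continuous_const.mul P.continuous.abs).intervalIntegrable _ _
  have split : (∫ τ in (-1 : ℝ)..1, Ig τ * P.eval τ)
      = (∫ τ in (-1 : ℝ)..1, (Ig τ - Bg τ) * P.eval τ) + ∫ τ in (-1 : ℝ)..1, Bg τ * P.eval τ := by
    rw [← intervalIntegral.integral_add int1 int2]
    refine intervalIntegral.integral_congr fun τ hτ => ?_
    ring
  rw [split]
  have hC1K : 0 ≤ C1 * K * ε ^ (m + 1) := by positivity
  have est1 : |∫ τ in (-1 : ℝ)..1, (Ig τ - Bg τ) * P.eval τ| ≤ C1 * K * ε ^ (m + 1) * Q := by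
    calc |∫ τ in (-1 : ℝ)..1, (Ig τ - Bg τ) * P.eval τ|
        ≤ ∫ τ in (-1 : ℝ)..1, |(Ig τ - Bg τ) * P.eval τ| :=
          intervalIntegral.abs_integral_le_integral_abs hone
      _ ≤ ∫ τ in (-1 : ℝ)..1, C1 * K * ε ^ (m + 1) * |P.eval τ| := by
          apply intervalIntegral.integral_mono_on hone int1.abs intP
          intro τ hτ
          rw [abs_mul]
          apply mul_le_mul_of_nonneg_right _ (abs_nonneg _)
          rw [hIg_eq τ hτ, hBg_eq τ hτ]
          exact inner_est τ hτ
      _ = C1 * K * ε ^ (m + 1) * Q := intervalIntegral.integral_const_mul _ _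
  have est2 : |(∫ τ in (-1 : ℝ)..1, Bg τ * P.eval τ) - f (x, y)| ≤ C1 * K * ε ^ (m + 1) := by
    have : (∫ τ in (-1 : ℝ)..1, Bg τ * P.eval τ)
        = ∫ τ in (-1 : ℝ)..1, f (x - ε * τ, y) * P.eval τ := by
      refine intervalIntegral.integral_congr fun τ hτ => ?_
      rw [huIcc] at hτ
      rw [hBg_eq τ hτ]
    rw [this]
    exact outer_est
  calc |(∫ τ in (-1 : ℝ)..1, (Ig τ - Bg τ) * P.eval τ)
        + (∫ τ in (-1 : ℝ)..1, Bg τ * P.eval τ) - f (x, y)|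
      ≤ |∫ τ in (-1 : ℝ)..1, (Ig τ - Bg τ) * P.eval τ|
        + |(∫ τ in (-1 : ℝ)..1, Bg τ * P.eval τ) - f (x, y)| := by
        rw [add_sub_assoc]; exact abs_add_le _ _
    _ ≤ C1 * K * ε ^ (m + 1) * Q + C1 * K * ε ^ (m + 1) := add_le_add est1 est2
    _ = C1 * (Q + 1) * K * ε ^ (m + 1) := by ring
end
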